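/- Let η ∈ Perm(X) be defined by η(σ^i G′) = σ^{i−1} G′. Then λ(σ) ∘ η ∘ λ(σ)⁻¹ = η and λ(τ) ∘ η ∘ λ(τ)⁻¹ = η^d; consequently N = ⟨η⟩ is a regular subgroup of Perm(X) of order p that is normalized by λ(G). -/

import Mathlib

/-- Let `η ∈ Perm(X)` be defined by `η(σ^i G') = σ^(i-1) G'`, and let
`λ : G → Perm(X)` be the left-translation map.  Then `λ(σ) η λ(σ)⁻¹ = η` and
`λ(τ) η λ(τ)⁻¹ = η^d`; consequently `N = ⟨η⟩` is a regular subgroup of `Perm(X)` of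
order `p` normalized by `λ(G)`. -/
theorem eta_generates_regular_subgroup_normalized_by_translations
    (p : ℕ) (hp : p.Prime) (d : ℕ) (hd : IsPrimitiveRoot (d : ZMod p) (p - 1))
    (G : Type*) [Group G] (σ τ : G)
    (hσ : orderOf σ = p) (hτ : orderOf τ = p - 1)
    (hrel : τ * σ * τ⁻¹ = σ ^ d) (hgen : Subgroup.closure {σ, τ} = ⊤)
    (η : Equiv.Perm (G ⧸ Subgroup.zpowers τ))
    (hη : ∀ i : ℤ, η (↑(σ ^ i) : G ⧸ Subgroup.zpowers τ) =
      (↑(σ ^ (i - 1)) : G ⧸ Subgroup.zpowers τ)) :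
    (MulAction.toPermHom G (G ⧸ Subgroup.zpowers τ) σ) * η *
        (MulAction.toPermHom G (G ⧸ Subgroup.zpowers τ) σ)⁻¹ = η ∧
    (MulAction.toPermHom G (G ⧸ Subgroup.zpowers τ) τ) * η *
        (MulAction.toPermHom G (G ⧸ Subgroup.zpowers τ) τ)⁻¹ = η ^ d ∧
    -- `N = ⟨η⟩` has order `p` ……
    Nat.card (Subgroup.zpowers η) = p ∧
    -- …… it is normalized by `λ(G)` ……
    (∀ g : G, ∀ n ∈ Subgroup.zpowers η,
      (MulAction.toPermHom G (G ⧸ Subgroup.zpowers τ) g) * n *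
        (MulAction.toPermHom G (G ⧸ Subgroup.zpowers τ) g)⁻¹ ∈ Subgroup.zpowers η) ∧
    -- …… it acts transitively on `X` ……
    (∀ x y : G ⧸ Subgroup.zpowers τ, ∃ n ∈ Subgroup.zpowers η, n x = y) ∧
    -- …… and only its identity element has a fixed point.
    (∀ n ∈ Subgroup.zpowers η, (∃ x : G ⧸ Subgroup.zpowers τ, n x = x) → n = 1) := by
  classical
  have hp2 : 2 ≤ p := hp.two_le
  set lam := MulAction.toPermHom G (G ⧸ Subgroup.zpowers τ) with hlam
  -- the left translation action
  have hact : ∀ (g a : G),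
      lam g ((a : G ⧸ Subgroup.zpowers τ)) = ((g * a : G) : G ⧸ Subgroup.zpowers τ) :=
    fun g a => rfl
  -- basic power facts for σ
  have hσ1 : ∀ m : ℤ, σ ^ m = 1 ↔ (p : ℤ) ∣ m := by
    intro m
    rw [← orderOf_dvd_iff_zpow_eq_one, hσ]
  have horderσ : σ ^ (p : ℤ) = 1 := (hσ1 _).mpr dvd_rfl
  have hmulσ : ∀ i : ℤ, σ * σ ^ i = σ ^ (i + 1) := by
    intro i; rw [add_comm, zpow_one_add]
  have hmulσinv : ∀ i : ℤ, σ⁻¹ * σ ^ i = σ ^ (i - 1) := by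
    intro i
    rw [show i - 1 = -1 + i by ring, zpow_add, zpow_neg_one]
  -- cosets σ^i G' and σ^j G' coincide iff i ≡ j mod p
  have hcongr : ∀ i j : ℤ, (p : ℤ) ∣ (i - j) →
      ((σ ^ i : G) : G ⧸ Subgroup.zpowers τ) = ((σ ^ j : G) : G ⧸ Subgroup.zpowers τ) := by
    intro i j hij
    have h1 : σ ^ (i - j) = 1 := (hσ1 _).mpr hij
    have h2 : σ ^ i = σ ^ j := by
      rw [show i = j + (i - j) by ring, zpow_add, h1, mul_one]
    rw [h2]
  have hinj : ∀ i j : ℤ, ((σ ^ i : G) : G ⧸ Subgroup.zpowers τ) = ((σ ^ j : G) : _) →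
      (p : ℤ) ∣ (i - j) := by
    intro i j hij
    have h1 : σ ^ (j - i) ∈ Subgroup.zpowers τ := by
      have h := QuotientGroup.eq.mp hij
      simpa [← zpow_neg, ← zpow_add, neg_add_eq_sub] using h
    have hdvd1 : orderOf (σ ^ (j - i)) ∣ p := by
      apply orderOf_dvd_of_pow_eq_one
      rw [← zpow_natCast, ← zpow_mul, mul_comm, zpow_mul, horderσ, one_zpow]
    have hdvd2 : orderOf (σ ^ (j - i)) ∣ (p - 1) := by
      rw [← hτ]; exact orderOf_dvd_of_mem_zpowers h1
    have hone : σ ^ (j - i) = 1 := by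
      rcases hp.eq_one_or_self_of_dvd _ hdvd1 with h | h
      · exact orderOf_eq_one_iff.mp h
      · exfalso
        rw [h] at hdvd2
        have := Nat.le_of_dvd (by omega) hdvd2
        omega
    have := (hσ1 _).mp hone
    have h2 := dvd_neg.mpr this
    rwa [neg_sub] at h2
  -- conjugation formulas
  have hconj1 : ∀ i : ℤ, τ * σ ^ i * τ⁻¹ = σ ^ ((d : ℤ) * i) := by
    intro i
    calc τ * σ ^ i * τ⁻¹ = (τ * σ * τ⁻¹) ^ i := conj_zpow.symm
      _ = (σ ^ d) ^ i := by rw [hrel]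
      _ = σ ^ ((d : ℤ) * i) := by rw [← zpow_natCast, ← zpow_mul]
  have hconjk : ∀ (k : ℕ) (i : ℤ), τ ^ k * σ ^ i * (τ ^ k)⁻¹ = σ ^ ((d : ℤ) ^ k * i) := by
    intro k
    induction k with
    | zero => intro i; simp
    | succ n ih =>
      intro i
      have h : τ ^ (n + 1) * σ ^ i * (τ ^ (n + 1))⁻¹
          = τ * (τ ^ n * σ ^ i * (τ ^ n)⁻¹) * τ⁻¹ := by
        rw [pow_succ']; group
      rw [h, ih, hconj1]
      congr 1
      ring
  have hτ1 : τ ^ (p - 1) = 1 := by rw [← hτ]; exact pow_orderOf_eq_one τ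
  have hτinv : τ⁻¹ = τ ^ (p - 2) := by
    refine inv_eq_of_mul_eq_one_right ?_
    rw [← pow_succ', show p - 2 + 1 = p - 1 by omega, hτ1]
  have hconjinv : ∀ i : ℤ, τ⁻¹ * σ ^ i * τ = σ ^ ((d : ℤ) ^ (p - 2) * i) := by
    intro i
    have h := hconjk (p - 2) i
    rw [← hτinv, inv_inv] at h
    exact h
  -- d * d^(p-2) ≡ 1 mod p
  have hde : (p : ℤ) ∣ ((d : ℤ) * (d : ℤ) ^ (p - 2) - 1) := by
    have h1 : (d : ZMod p) ^ (p - 1) = 1 := hd.pow_eq_one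
    have h2 : (((d : ℤ) * (d : ℤ) ^ (p - 2) - 1 : ℤ) : ZMod p) = 0 := by
      push_cast
      rw [← pow_succ', show p - 2 + 1 = p - 1 by omega, h1, sub_self]
    exact (ZMod.intCast_zmod_eq_zero_iff_dvd _ p).mp h2
  -- coset forms of the conjugation formulas
  have hmulτ : ∀ j : ℤ, ((τ * σ ^ j : G) : G ⧸ Subgroup.zpowers τ)
      = ((σ ^ ((d : ℤ) * j) : G) : _) := by
    intro j
    have h : τ * σ ^ j = σ ^ ((d : ℤ) * j) * τ := by
      rw [← hconj1 j]; group
    rw [h, QuotientGroup.mk_mul_of_mem _ (Subgroup.mem_zpowers τ)]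
  have hmulτinv : ∀ j : ℤ, ((τ⁻¹ * σ ^ j : G) : G ⧸ Subgroup.zpowers τ)
      = ((σ ^ ((d : ℤ) ^ (p - 2) * j) : G) : _) := by
    intro j
    have h : τ⁻¹ * σ ^ j = σ ^ ((d : ℤ) ^ (p - 2) * j) * τ⁻¹ := by
      rw [← hconjinv j]; group
    rw [h, QuotientGroup.mk_mul_of_mem _ (inv_mem (Subgroup.mem_zpowers τ))]
  -- every coset has the form σ^i G'
  have hsurj : ∀ x : G ⧸ Subgroup.zpowers τ, ∃ i : ℤ, ((σ ^ i : G) : _) = x := by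
    intro x
    obtain ⟨g, rfl⟩ := QuotientGroup.mk_surjective x
    have hg : g ∈ Subgroup.closure ({σ, τ} : Set G) := by rw [hgen]; trivial
    have key : ∀ h, h ∈ Subgroup.closure ({σ, τ} : Set G) →
        (∀ i : ℤ, ∃ j : ℤ, ((h * σ ^ i : G) : G ⧸ Subgroup.zpowers τ) = ((σ ^ j : G) : _)) ∧
        (∀ i : ℤ, ∃ j : ℤ, ((h⁻¹ * σ ^ i : G) : G ⧸ Subgroup.zpowers τ) = ((σ ^ j : G) : _)) := by
      intro h hh
      induction hh using Subgroup.closure_induction with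
      | mem x hx =>
        simp only [Set.mem_insert_iff, Set.mem_singleton_iff] at hx
        rcases hx with rfl | rfl
        · constructor
          · intro i; exact ⟨i + 1, by rw [hmulσ]⟩
          · intro i; exact ⟨i - 1, by rw [hmulσinv]⟩
        · constructor
          · intro i; exact ⟨(d : ℤ) * i, hmulτ i⟩
          · intro i; exact ⟨(d : ℤ) ^ (p - 2) * i, hmulτinv i⟩
      | one =>
        constructor <;> intro i <;> exact ⟨i, by simp⟩
      | mul x y hx hy ihx ihy =>
        constructor
        · intro i
          obtain ⟨j1, hj1⟩ := ihy.1 i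
          obtain ⟨j2, hj2⟩ := ihx.1 j1
          refine ⟨j2, ?_⟩
          have h4 : (σ ^ j1)⁻¹ * (y * σ ^ i) ∈ Subgroup.zpowers τ :=
            QuotientGroup.eq.mp hj1.symm
          have h3 : x * y * σ ^ i = (x * σ ^ j1) * ((σ ^ j1)⁻¹ * (y * σ ^ i)) := by group
          rw [h3, QuotientGroup.mk_mul_of_mem _ h4]
          exact hj2
        · intro i
          obtain ⟨j1, hj1⟩ := ihx.2 i
          obtain ⟨j2, hj2⟩ := ihy.2 j1
          refine ⟨j2, ?_⟩
          have h4 : (σ ^ j1)⁻¹ * (x⁻¹ * σ ^ i) ∈ Subgroup.zpowers τ :=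
            QuotientGroup.eq.mp hj1.symm
          have h3 : (x * y)⁻¹ * σ ^ i = (y⁻¹ * σ ^ j1) * ((σ ^ j1)⁻¹ * (x⁻¹ * σ ^ i)) := by
            group
          rw [h3, QuotientGroup.mk_mul_of_mem _ h4]
          exact hj2
      | inv x hx ihx =>
        refine ⟨ihx.2, ?_⟩
        intro i
        obtain ⟨j, hj⟩ := ihx.1 i
        exact ⟨j, by rw [inv_inv]; exact hj⟩
    obtain ⟨j, hj⟩ := (key g hg).1 0
    refine ⟨j, ?_⟩
    rw [← hj]
    norm_num
  -- extensionality of permutations via the cosets σ^i G'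
  have hext : ∀ (α β : Equiv.Perm (G ⧸ Subgroup.zpowers τ)),
      (∀ i : ℤ, α ((σ ^ i : G) : _) = β ((σ ^ i : G) : _)) → α = β := by
    intro α β h
    ext x
    obtain ⟨i, rfl⟩ := hsurj x
    exact h i
  -- powers of η
  have hηpow : ∀ (k : ℕ) (i : ℤ), (η ^ k) ((σ ^ i : G) : G ⧸ Subgroup.zpowers τ)
      = ((σ ^ (i - (k : ℤ)) : G) : _) := by
    intro k
    induction k with
    | zero => intro i; simp
    | succ n ih =>
      intro i
      rw [pow_succ, Equiv.Perm.mul_apply, hη, ih,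
        show i - 1 - (n : ℤ) = i - ((n + 1 : ℕ) : ℤ) by push_cast; ring]
  have hηinv : ∀ i : ℤ, η⁻¹ ((σ ^ i : G) : G ⧸ Subgroup.zpowers τ)
      = ((σ ^ (i + 1) : G) : _) := by
    intro i
    have h := hη (i + 1)
    rw [add_sub_cancel_right] at h
    rw [← h]; exact η.symm_apply_apply _
  have hηinvpow : ∀ (k : ℕ) (i : ℤ), (η⁻¹ ^ k) ((σ ^ i : G) : G ⧸ Subgroup.zpowers τ)
      = ((σ ^ (i + (k : ℤ)) : G) : _) := by
    intro k
    induction k with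
    | zero => intro i; simp
    | succ n ih =>
      intro i
      rw [pow_succ, Equiv.Perm.mul_apply, hηinv, ih,
        show i + 1 + (n : ℤ) = i + ((n + 1 : ℕ) : ℤ) by push_cast; ring]
  have hηzpow : ∀ (m i : ℤ), (η ^ m) ((σ ^ i : G) : G ⧸ Subgroup.zpowers τ)
      = ((σ ^ (i - m) : G) : _) := by
    intro m i
    cases m with
    | ofNat k =>
      rw [show (Int.ofNat k) = ((k : ℕ) : ℤ) from rfl, zpow_natCast, hηpow]
    | negSucc k =>
      rw [zpow_negSucc, ← inv_pow, hηinvpow,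
        show i + ((k + 1 : ℕ) : ℤ) = i - Int.negSucc k by
          rw [Int.negSucc_eq]; push_cast; ring]
  have hηp : η ^ p = 1 := by
    apply hext
    intro i
    rw [hηpow, Equiv.Perm.one_apply]
    apply hcongr
    rw [show i - (p : ℤ) - i = -(p : ℤ) by ring]
    exact dvd_neg.mpr dvd_rfl
  -- the two conjugation identities
  have hA : lam σ * η * (lam σ)⁻¹ = η := by
    apply hext
    intro i
    rw [← map_inv]
    simp only [Equiv.Perm.mul_apply]
    rw [hact, hmulσinv, hη, hact, hmulσ, hη,
      show i - 1 - 1 + 1 = i - 1 by ring]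
  have hB : lam τ * η * (lam τ)⁻¹ = η ^ d := by
    apply hext
    intro i
    rw [← map_inv]
    simp only [Equiv.Perm.mul_apply]
    rw [hact, hmulτinv, hη, hact, hmulτ, hηpow]
    apply hcongr
    rw [show (d : ℤ) * ((d : ℤ) ^ (p - 2) * i - 1) - (i - (d : ℤ))
        = ((d : ℤ) * (d : ℤ) ^ (p - 2) - 1) * i by ring]
    exact dvd_mul_of_dvd_left hde i
  have hA' : (lam σ)⁻¹ * η * lam σ = η := by
    calc (lam σ)⁻¹ * η * lam σ
        = (lam σ)⁻¹ * (lam σ * η * (lam σ)⁻¹) * lam σ := by rw [hA]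
      _ = η := by group
  have hC : (lam τ)⁻¹ * η * lam τ = η ^ (d ^ (p - 2)) := by
    apply hext
    intro i
    rw [← map_inv]
    simp only [Equiv.Perm.mul_apply]
    rw [hact, hmulτ, hη, hact, hmulτinv, hηpow]
    apply hcongr
    rw [show (d : ℤ) ^ (p - 2) * ((d : ℤ) * i - 1) - (i - ((d ^ (p - 2) : ℕ) : ℤ))
        = ((d : ℤ) * (d : ℤ) ^ (p - 2) - 1) * i by push_cast; ring]
    exact dvd_mul_of_dvd_left hde i
  -- normalizer membership
  have hnormσ : lam σ ∈ Subgroup.normalizer (Subgroup.zpowers η : Set (Equiv.Perm (G ⧸ Subgroup.zpowers τ))) := by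
    rw [Subgroup.mem_normalizer_iff]
    intro h
    constructor
    · intro hh
      obtain ⟨m, rfl⟩ := Subgroup.mem_zpowers_iff.mp hh
      refine Subgroup.mem_zpowers_iff.mpr ⟨m, ?_⟩
      rw [← conj_zpow, hA]
    · intro hh
      obtain ⟨m, hm⟩ := Subgroup.mem_zpowers_iff.mp hh
      refine Subgroup.mem_zpowers_iff.mpr ⟨m, ?_⟩
      calc η ^ m = ((lam σ)⁻¹ * η * ((lam σ)⁻¹)⁻¹) ^ m := by rw [inv_inv, hA']
        _ = (lam σ)⁻¹ * η ^ m * ((lam σ)⁻¹)⁻¹ := conj_zpow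
        _ = (lam σ)⁻¹ * (lam σ * h * (lam σ)⁻¹) * ((lam σ)⁻¹)⁻¹ := by rw [hm]
        _ = h := by group
  have hnormτ : lam τ ∈ Subgroup.normalizer (Subgroup.zpowers η : Set (Equiv.Perm (G ⧸ Subgroup.zpowers τ))) := by
    rw [Subgroup.mem_normalizer_iff]
    intro h
    constructor
    · intro hh
      obtain ⟨m, rfl⟩ := Subgroup.mem_zpowers_iff.mp hh
      refine Subgroup.mem_zpowers_iff.mpr ⟨(d : ℤ) * m, ?_⟩
      rw [← conj_zpow, hB, ← zpow_natCast η d, ← zpow_mul]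
    · intro hh
      obtain ⟨m, hm⟩ := Subgroup.mem_zpowers_iff.mp hh
      refine Subgroup.mem_zpowers_iff.mpr ⟨((d ^ (p - 2) : ℕ) : ℤ) * m, ?_⟩
      calc η ^ (((d ^ (p - 2) : ℕ) : ℤ) * m)
          = (η ^ (d ^ (p - 2) : ℕ)) ^ m := by rw [← zpow_natCast η (d ^ (p - 2)), ← zpow_mul]
        _ = ((lam τ)⁻¹ * η * ((lam τ)⁻¹)⁻¹) ^ m := by rw [inv_inv, hC]
        _ = (lam τ)⁻¹ * η ^ m * ((lam τ)⁻¹)⁻¹ := conj_zpow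
        _ = (lam τ)⁻¹ * (lam τ * h * (lam τ)⁻¹) * ((lam τ)⁻¹)⁻¹ := by rw [hm]
        _ = h := by group
  have hnormall : ∀ g : G, lam g ∈ Subgroup.normalizer (Subgroup.zpowers η : Set (Equiv.Perm (G ⧸ Subgroup.zpowers τ))) := by
    intro g
    have hle : Subgroup.closure ({σ, τ} : Set G)
        ≤ Subgroup.comap lam (Subgroup.normalizer (Subgroup.zpowers η : Set (Equiv.Perm (G ⧸ Subgroup.zpowers τ)))) := by
      rw [Subgroup.closure_le]
      intro x hx
      simp only [Set.mem_insert_iff, Set.mem_singleton_iff] at hx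
      rcases hx with rfl | rfl
      · exact hnormσ
      · exact hnormτ
    exact hle (by rw [hgen]; trivial)
  refine ⟨hA, hB, ?_, ?_, ?_, ?_⟩
  · -- order p
    rw [Nat.card_zpowers]
    have h1 : orderOf η ∣ p := orderOf_dvd_of_pow_eq_one hηp
    rcases hp.eq_one_or_self_of_dvd _ h1 with h | h
    · exfalso
      have hone : η = 1 := orderOf_eq_one_iff.mp h
      have h2 := hη 0
      rw [hone, Equiv.Perm.one_apply] at h2
      have h3 := hinj 0 (0 - 1) h2
      have h4 : (p : ℤ) ∣ 1 := by simpa using h3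
      have h5 : p ∣ 1 := by exact_mod_cast h4
      simp at h5
      omega
    · exact h
  · -- normalized by λ(G)
    intro g n hn
    exact (Subgroup.mem_normalizer_iff.mp (hnormall g) n).mp hn
  · -- transitivity
    intro x y
    obtain ⟨i, rfl⟩ := hsurj x
    obtain ⟨j, rfl⟩ := hsurj y
    refine ⟨η ^ (i - j), Subgroup.mem_zpowers_iff.mpr ⟨i - j, rfl⟩, ?_⟩
    rw [hηzpow]
    apply hcongr
    rw [show i - (i - j) - j = (0 : ℤ) by ring]
    exact dvd_zero _
  · -- only the identity has a fixed point
    rintro n hn ⟨x, hx⟩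
    obtain ⟨m, rfl⟩ := Subgroup.mem_zpowers_iff.mp hn
    obtain ⟨i, rfl⟩ := hsurj x
    rw [hηzpow] at hx
    have hdvd := hinj _ _ hx
    rw [show i - m - i = -m by ring] at hdvd
    have hm : (p : ℤ) ∣ m := dvd_neg.mp hdvd
    obtain ⟨t, rfl⟩ := hm
    rw [zpow_mul, zpow_natCast, hηp, one_zpow]
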